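/- arXiv:2105.04855 — 2 statements merged into one kernel-verified Lean document; each statement's English description precedes it below -/
import Mathlib

section
/- Let φ : ℝ^d → ℝ be twice continuously differentiable and suppose there exist λ ∈ ℝ with λ ≠ 0, vectors α, β ∈ ℝ^d, and γ ∈ ℝ such that φ(x) + (1/2) ∇φ(x)·x + α·∇φ(x) = (λ/4)|x|² + β·x + γ for all x ∈ ℝ^d. Then φ is a quadratic polynomial: φ(x) = (λ/8)|x|² + b₀·x + c₀ with b₀ = (2/3)(β − (λ/4)α) and c₀ = γ − (2/3)α·(β − (λ/4)α). -/
open scoped RealInnerProductSpace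

/-- If a `C²` potential `φ` satisfies
`φ(x) + (1/2)∇φ(x)·x + α·∇φ(x) = (λ/4)|x|² + β·x + γ` with `λ ≠ 0`, then `φ` is the
quadratic polynomial `φ(x) = (λ/8)|x|² + b₀·x + c₀` with
`b₀ = (2/3)(β − (λ/4)α)` and `c₀ = γ − (2/3)α·(β − (λ/4)α)`. -/
theorem stmt10 {d : ℕ} (φ : EuclideanSpace ℝ (Fin d) → ℝ) (hφ : ContDiff ℝ 2 φ)
    (lam : ℝ) (hlam : lam ≠ 0) (α β : EuclideanSpace ℝ (Fin d)) (γ : ℝ)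
    (heq : ∀ x : EuclideanSpace ℝ (Fin d),
      φ x + (1 / 2) * ⟪gradient φ x, x⟫ + ⟪α, gradient φ x⟫
        = lam / 4 * ‖x‖ ^ 2 + ⟪β, x⟫ + γ) :
    ∀ x : EuclideanSpace ℝ (Fin d),
      φ x = lam / 8 * ‖x‖ ^ 2 + ⟪(2 / 3 : ℝ) • (β - (lam / 4) • α), x⟫
        + (γ - (2 / 3) * ⟪α, β - (lam / 4) • α⟫) := by
  intro x₀
  have hdiff : Differentiable ℝ φ := hφ.differentiable (by norm_num)
  set b : EuclideanSpace ℝ (Fin d) := (2 / 3 : ℝ) • (β - (lam / 4) • α) with hb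
  set c0 : ℝ := γ - (2 / 3) * ⟪α, β - (lam / 4) • α⟫ with hc0
  set v : EuclideanSpace ℝ (Fin d) := x₀ + (2:ℝ) • α with hv
  set c : ℝ → EuclideanSpace ℝ (Fin d) := fun t => t • v - (2:ℝ) • α with hcdef
  -- scalar abbreviations facts
  have hbv : ⟪b, v⟫ = (2/3)*⟪β, v⟫ - (lam/6)*⟪α, v⟫ := by
    simp only [hb, real_inner_smul_left, inner_sub_left]
    ring
  have hbα : ⟪b, α⟫ = (2/3)*⟪β, α⟫ - (lam/6)*⟪α, α⟫ := by
    simp only [hb, real_inner_smul_left, inner_sub_left]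
    ring
  have hc0' : c0 = γ - (2/3)*⟪α, β⟫ + (lam/6)*⟪α, α⟫ := by
    simp only [hc0, inner_sub_right, real_inner_smul_right]
    ring
  have hαβ : ⟪α, β⟫ = ⟪β, α⟫ := real_inner_comm β α
  have hN : ∀ s : ℝ, ‖c s‖^2 = s^2*⟪v, v⟫ - 4*s*⟪α, v⟫ + 4*⟪α, α⟫ := by
    intro s
    rw [← real_inner_self_eq_norm_sq]
    simp only [hcdef, inner_sub_left, inner_sub_right, real_inner_smul_left,
      real_inner_smul_right]
    linear_combination (2*s) * real_inner_comm v α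
  have hB : ∀ s : ℝ, ⟪b, c s⟫ = s*⟪b, v⟫ - 2*⟪b, α⟫ := by
    intro s
    simp only [hcdef, inner_sub_right, real_inner_smul_right]
  have hβc : ∀ s : ℝ, ⟪β, c s⟫ = s*⟪β, v⟫ - 2*⟪β, α⟫ := by
    intro s
    simp only [hcdef, inner_sub_right, real_inner_smul_right]
  set ψ : EuclideanSpace ℝ (Fin d) → ℝ :=
    fun x => φ x - (lam/8 * ‖x‖^2 + ⟪b, x⟫ + c0) with hψ
  set h : ℝ → ℝ := fun t => t^2 * ψ (c t) with hh
  have hkey : ∀ t : ℝ, HasDerivAt h 0 t := by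
    intro t
    have hcd : HasDerivAt c v t := by
      have hc' := ((hasDerivAt_id t).smul_const v).sub_const ((2:ℝ) • α)
      simp only [one_smul, id] at hc'
      exact hc'
    have hφc : HasDerivAt (fun s => φ (c s)) ⟪gradient φ (c t), v⟫ t := by
      have h2 := (hdiff (c t)).hasGradientAt.hasFDerivAt
      simpa [InnerProductSpace.toDual_apply_apply, Function.comp_def] using h2.comp_hasDerivAt t hcd
    -- derivative of the quadratic part along c
    have hp : HasDerivAt (fun s : ℝ => lam/8 * (s^2*⟪v, v⟫ - 4*s*⟪α, v⟫ + 4*⟪α, α⟫)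
        + (s*⟪b, v⟫ - 2*⟪b, α⟫) + c0)
        (lam/8*(2*t*⟪v, v⟫ - 4*⟪α, v⟫) + ⟪b, v⟫) t := by
      have h1 : HasDerivAt (fun s : ℝ => s^2) (2*t) t := by
        simpa using hasDerivAt_pow 2 t
      have h2 := ((((h1.mul_const ⟪v, v⟫).sub
          (((hasDerivAt_id t).const_mul (4:ℝ)).mul_const ⟪α, v⟫)).add_const
          (4*⟪α, α⟫)).const_mul (lam/8)).add
          (((hasDerivAt_id t).mul_const ⟪b, v⟫).sub_const (2*⟪b, α⟫)) |>.add_const c0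
      convert h2 using 2 <;> first | rfl | (simp only [Pi.add_apply, Pi.sub_apply, id_eq]; ring) | ring
    have hg : HasDerivAt (fun s => lam/8 * ‖c s‖^2 + ⟪b, c s⟫ + c0)
        (lam/8*(2*t*⟪v, v⟫ - 4*⟪α, v⟫) + ⟪b, v⟫) t := by
      have : (fun s => lam/8 * ‖c s‖^2 + ⟪b, c s⟫ + c0)
          = fun s : ℝ => lam/8 * (s^2*⟪v, v⟫ - 4*s*⟪α, v⟫ + 4*⟪α, α⟫)
            + (s*⟪b, v⟫ - 2*⟪b, α⟫) + c0 := by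
        funext s; rw [hN s, hB s]
      rw [this]; exact hp
    have hψc : HasDerivAt (fun s => ψ (c s))
        (⟪gradient φ (c t), v⟫ - (lam/8*(2*t*⟪v, v⟫ - 4*⟪α, v⟫) + ⟪b, v⟫)) t := by
      simp only [hψ]
      exact hφc.sub hg
    have h1 : HasDerivAt (fun s : ℝ => s^2) (2*t) t := by
      simpa using hasDerivAt_pow 2 t
    have hht := h1.mul hψc
    have hval : t * ⟪gradient φ (c t), v⟫
        = ⟪gradient φ (c t), c t⟫ + 2*⟪α, gradient φ (c t)⟫ := by
      have htv : t • v = c t + (2:ℝ) • α := by simp [hcdef]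
      rw [← real_inner_smul_right, htv, inner_add_right, real_inner_smul_right,
        real_inner_comm (gradient φ (c t)) α]
    have hzero : 2*t * ψ (c t) + t^2 *
        (⟪gradient φ (c t), v⟫ - (lam/8*(2*t*⟪v, v⟫ - 4*⟪α, v⟫) + ⟪b, v⟫)) = 0 := by
      have h2 := heq (c t)
      simp only [hψ]
      linear_combination t*hval + 2*t*h2 + (lam/4*t)*(hN t) + 2*t*(hβc t)
        - 2*t*(hB t) - 3*t^2*hbv + 4*t*hbα - 2*t*hc0' + (4/3*t)*hαβ
    have : HasDerivAt h (2*t * ψ (c t) + t^2 *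
        (⟪gradient φ (c t), v⟫ - (lam/8*(2*t*⟪v, v⟫ - 4*⟪α, v⟫) + ⟪b, v⟫))) t := hht
    rwa [hzero] at this
  have hconst : h 1 = h 0 :=
    is_const_of_deriv_eq_zero (fun t => (hkey t).differentiableAt)
      (fun t => (hkey t).deriv) 1 0
  have hc1 : c 1 = x₀ := by simp [hcdef, hv]
  have h0 : h 0 = 0 := by simp [hh]
  have h1 : h 1 = ψ x₀ := by simp [hh, hc1]
  have hψ0 : ψ x₀ = 0 := by rw [← h1, hconst, h0]
  have := hψ0
  simp only [hψ] at this
  linarith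
end

section
/- Let λ, α > 0 and let F : [0,∞) → [0,∞) be a differentiable function satisfying, for some constants K, M ≥ 0 and all R > 0, t ≥ 0: F'(t) ≤ −λ(1+R²)^{−α/2} F(t) + K (1+R²)^{−α/2} e^{−βR²/2} M. Then, choosing 1+R² = t^{2/(2+α)}, there exist explicit constants C, Λ > 0 (depending on λ, α, β, K) such that F(t) ≤ C·exp(−Λ t^{2/(2+α)})·(F(0) + M) for all t ≥ 0. -/
lemma gron (μ A : ℝ) (hμ : 0 < μ) (hA : 0 ≤ A) (F : ℝ → ℝ) (hFd : Differentiable ℝ F)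
    (h : ∀ s, 0 ≤ s → deriv F s ≤ -μ * F s + μ * A) :
    ∀ t, 0 ≤ t → F t ≤ Real.exp (-(μ * t)) * F 0 + A := by
  intro t ht
  set g : ℝ → ℝ := fun s => Real.exp (μ * s) * (F s - A) with hg
  have hgd : Differentiable ℝ g := by
    exact (Real.differentiable_exp.comp (differentiable_id.const_mul μ)).mul (hFd.sub_const A)
  have hderiv : ∀ s, deriv g s = Real.exp (μ * s) * (μ * (F s - A) + deriv F s) := by
    intro s
    have h1 : HasDerivAt (fun s => Real.exp (μ * s)) (Real.exp (μ * s) * μ) s := by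
      simpa using ((hasDerivAt_id s).const_mul μ).exp
    have h2 : HasDerivAt (fun s => F s - A) (deriv F s) s := ((hFd s).hasDerivAt).sub_const A
    rw [show deriv g s = _ from (h1.mul h2).deriv]; ring
  have hanti : AntitoneOn g (Set.Icc 0 t) := by
    apply antitoneOn_of_deriv_nonpos (convex_Icc 0 t) hgd.continuous.continuousOn
      hgd.differentiableOn
    intro x hx
    rw [interior_Icc] at hx
    rw [hderiv]
    have hx0 : 0 ≤ x := le_of_lt hx.1
    have h3 := h x hx0
    have hexp : (0:ℝ) < Real.exp (μ * x) := Real.exp_pos _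
    nlinarith [h3, hexp.le]
  have hgt := hanti (Set.left_mem_Icc.mpr ht) (Set.right_mem_Icc.mpr ht) ht
  simp only [hg, mul_zero, Real.exp_zero, one_mul] at hgt
  have h4 := mul_le_mul_of_nonneg_left hgt (Real.exp_pos (-(μ * t))).le
  rw [← mul_assoc, ← Real.exp_add, neg_add_cancel, Real.exp_zero, one_mul] at h4
  have hexp1 : Real.exp (-(μ * t)) ≤ 1 := by
    apply Real.exp_le_one_iff.mpr; nlinarith
  nlinarith [Real.exp_pos (-(μ * t)), h4]

lemma auxExp (α : ℝ) (h : 0 < 2 + α) :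
    (2 / (2 + α)) * -(α / 2) + 1 = 2 / (2 + α) := by
  field_simp
  ring

set_option maxHeartbeats 1000000 in
/-- Grönwall-type ODE lemma giving stretched-exponential decay: if for all `R > 0`
`F' ≤ −λ(1+R²)^{−α/2} F + K(1+R²)^{−α/2} e^{−βR²/2} M`, then (choosing `1+R² = t^{2/(2+α)}`)
there are `C, Λ > 0` with `F(t) ≤ C exp(−Λ t^{2/(2+α)}) (F(0) + M)`. -/
theorem stmt16 (lam α β K M : ℝ) (hlam : 0 < lam) (hα : 0 < α) (hβ : 0 < β)
    (hK : 0 ≤ K) (hM : 0 ≤ M) (F : ℝ → ℝ) (hFd : Differentiable ℝ F)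
    (hFnn : ∀ t, 0 ≤ t → 0 ≤ F t)
    (hineq : ∀ R > (0 : ℝ), ∀ t, 0 ≤ t →
      deriv F t ≤ -lam * (1 + R ^ 2) ^ (-(α / 2)) * F t
        + K * (1 + R ^ 2) ^ (-(α / 2)) * Real.exp (-β * R ^ 2 / 2) * M) :
    ∃ C > (0 : ℝ), ∃ Λ > (0 : ℝ), ∀ t, 0 ≤ t →
      F t ≤ C * Real.exp (-Λ * t ^ (2 / (2 + α))) * (F 0 + M) := by
  have key : ∀ R > (0:ℝ), ∀ t, 0 ≤ t →
      F t ≤ Real.exp (-(lam * (1 + R ^ 2) ^ (-(α / 2)) * t)) * F 0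
        + K / lam * Real.exp (-β * R ^ 2 / 2) * M := by
    intro R hR t ht
    have hbase : (0:ℝ) < 1 + R ^ 2 := by positivity
    have hpow : (0:ℝ) < (1 + R ^ 2) ^ (-(α / 2)) := Real.rpow_pos_of_pos hbase _
    have hμ : 0 < lam * (1 + R ^ 2) ^ (-(α / 2)) := by positivity
    have hA : 0 ≤ K / lam * Real.exp (-β * R ^ 2 / 2) * M := by positivity
    refine gron _ _ hμ hA F hFd ?_ t ht
    intro s hs
    refine (hineq R hR s hs).trans (le_of_eq ?_)
    field_simp
  set θ : ℝ := 2 / (2 + α) with hθdef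
  have h2α : (0:ℝ) < 2 + α := by linarith
  have hθpos : 0 < θ := by positivity
  have hc : (0:ℝ) < 1 + K / lam * Real.exp (β / 2) := by positivity
  refine ⟨Real.exp (min lam (β / 2)) * (1 + K / lam * Real.exp (β / 2)), by positivity,
    min lam (β / 2), lt_min hlam (by positivity), ?_⟩
  set Λ : ℝ := min lam (β / 2) with hΛdef
  have hΛpos : 0 < Λ := lt_min hlam (by positivity)
  have hΛlam : Λ ≤ lam := min_le_left _ _
  have hΛβ : Λ ≤ β / 2 := min_le_right _ _
  set c : ℝ := 1 + K / lam * Real.exp (β / 2) with hcdef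
  have hbe : (1:ℝ) ≤ Real.exp (β / 2) := Real.one_le_exp (by positivity)
  have heΛ : (1:ℝ) ≤ Real.exp Λ := Real.one_le_exp hΛpos.le
  intro t ht
  have hE : (0:ℝ) < Real.exp (-Λ * t ^ θ) := Real.exp_pos _
  have hF0 : 0 ≤ F 0 := hFnn 0 le_rfl
  have hKl : 0 ≤ K / lam := by positivity
  rcases le_or_gt t 1 with ht1 | ht1
  · -- small t : use R = 1
    have hk := key 1 one_pos t ht
    have he1 : Real.exp (-(lam * (1 + (1:ℝ) ^ 2) ^ (-(α / 2)) * t)) ≤ 1 := by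
      apply Real.exp_le_one_iff.mpr
      have hp : (0:ℝ) < (1 + (1:ℝ) ^ 2) ^ (-(α / 2)) := Real.rpow_pos_of_pos (by norm_num) _
      have := mul_nonneg (mul_nonneg hlam.le hp.le) ht
      linarith
    have he2 : Real.exp (-β * (1:ℝ) ^ 2 / 2) ≤ 1 := by
      apply Real.exp_le_one_iff.mpr; nlinarith
    have hstep : F t ≤ F 0 + K / lam * M := by
      nlinarith [hk, mul_le_mul_of_nonneg_right he1 hF0,
        mul_le_mul_of_nonneg_left (mul_le_mul_of_nonneg_right he2 hM) hKl]
    have htθ : t ^ θ ≤ 1 := Real.rpow_le_one ht ht1 hθpos.le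
    have hC1 : c ≤ Real.exp Λ * c * Real.exp (-Λ * t ^ θ) := by
      have h1 : (1:ℝ) ≤ Real.exp Λ * Real.exp (-Λ * t ^ θ) := by
        rw [← Real.exp_add]
        apply Real.one_le_exp
        nlinarith
      nlinarith [hc]
    have hstep2 : F 0 + K / lam * M ≤ c * (F 0 + M) := by
      rw [hcdef]
      nlinarith [mul_nonneg hKl hM, mul_nonneg (mul_nonneg hKl hM) (sub_nonneg.mpr hbe),
        mul_nonneg (mul_nonneg hKl (Real.exp_pos (β / 2)).le) hF0]
    calc F t ≤ F 0 + K / lam * M := hstep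
      _ ≤ c * (F 0 + M) := hstep2
      _ ≤ Real.exp Λ * c * Real.exp (-Λ * t ^ θ) * (F 0 + M) :=
          mul_le_mul_of_nonneg_right hC1 (by linarith)
  · -- large t
    have ht0 : (0:ℝ) < t := lt_trans one_pos ht1
    have hs1 : 1 < t ^ θ := Real.one_lt_rpow_iff_of_pos ht0 |>.mpr (Or.inl ⟨ht1, hθpos⟩)
    have hu0 : (0:ℝ) ≤ t ^ θ := by linarith
    set R : ℝ := Real.sqrt (t ^ θ - 1) with hRdef
    have hRpos : 0 < R := Real.sqrt_pos.mpr (by linarith)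
    have hR2 : R ^ 2 = t ^ θ - 1 := Real.sq_sqrt (by linarith)
    have hk := key R hRpos t ht
    rw [hR2] at hk
    have h1 : (1:ℝ) + (t ^ θ - 1) = t ^ θ := by ring
    rw [h1] at hk
    have hθeq : θ * -(α / 2) + 1 = θ := by
      rw [hθdef]; exact auxExp α h2α
    have hmul : lam * (t ^ θ) ^ (-(α / 2)) * t = lam * t ^ θ := by
      rw [mul_assoc, ← Real.rpow_mul ht0.le]
      nth_rewrite 2 [← Real.rpow_one t]
      rw [← Real.rpow_add ht0, hθeq]
    rw [hmul] at hk
    have hb1 : Real.exp (-(lam * t ^ θ)) ≤ Real.exp (-Λ * t ^ θ) := by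
      apply Real.exp_le_exp.mpr
      have h5 := mul_le_mul_of_nonneg_right hΛlam hu0
      linarith
    have hb2 : Real.exp (-β * (t ^ θ - 1) / 2) ≤ Real.exp (β / 2) * Real.exp (-Λ * t ^ θ) := by
      rw [← Real.exp_add]
      apply Real.exp_le_exp.mpr
      have h5 := mul_le_mul_of_nonneg_right hΛβ hu0
      linarith
    have hmid : F t ≤ Real.exp (-Λ * t ^ θ) * F 0
        + K / lam * (Real.exp (β / 2) * Real.exp (-Λ * t ^ θ)) * M := by
      calc F t ≤ _ := hk
        _ ≤ _ := by gcongr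
    have hfin : Real.exp (-Λ * t ^ θ) * F 0
        + K / lam * (Real.exp (β / 2) * Real.exp (-Λ * t ^ θ)) * M
        ≤ Real.exp Λ * c * Real.exp (-Λ * t ^ θ) * (F 0 + M) := by
      have hA1 : c * Real.exp (-Λ * t ^ θ) * (F 0 + M)
          ≤ Real.exp Λ * c * Real.exp (-Λ * t ^ θ) * (F 0 + M) := by
        nlinarith [mul_nonneg (mul_nonneg hc.le hE.le) (add_nonneg hF0 hM)]
      have hA2 : Real.exp (-Λ * t ^ θ) * F 0
          + K / lam * (Real.exp (β / 2) * Real.exp (-Λ * t ^ θ)) * M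
          ≤ c * Real.exp (-Λ * t ^ θ) * (F 0 + M) := by
        rw [hcdef]
        nlinarith [mul_nonneg hE.le (add_nonneg hF0 hM),
          mul_nonneg (mul_nonneg (mul_nonneg hKl (Real.exp_pos (β / 2)).le) hE.le) hF0]
      exact le_trans hA2 hA1
    exact le_trans hmid hfin
end
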